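/- Let Y be a locally convex space whose topology is not weak, i.e., there exists a continuous seminorm p on Y such that ker p has infinite codimension. Then there exists a uniformly equicontinuous sequence {f_n} in the continuous dual Y' such that for every finitely supported scalar sequence (a_n) there exists y ∈ Y with f_n(y) = a_n for all n. -/

import Mathlib

open Module Submodule

section Biorth

variable {𝕜 E : Type*} [RCLike 𝕜] [NormedAddCommGroup E] [NormedSpace 𝕜 E]

/-- In an infinite-dimensional normed space over `RCLike 𝕜` there is a biorthogonal
sequence of vectors and continuous functionals. -/
theorem exists_biorthogonal_aux (hE : ¬ Module.Finite 𝕜 E) :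
    ∃ (e : ℕ → E) (g : ℕ → E →L[𝕜] 𝕜), ∀ n m, (g n) (e m) = if n = m then 1 else 0 := by
  classical
  have step : ∀ s : Finset (E × (E →L[𝕜] 𝕜)),
      (∀ x ∈ s, x.2 x.1 = (1 : 𝕜)) →
      ∃ y : E × (E →L[𝕜] 𝕜), y.2 y.1 = 1 ∧ ∀ x ∈ s, x.2 y.1 = 0 ∧ y.2 x.1 = 0 := by
    intro s _
    set S : Submodule 𝕜 E := span 𝕜 (Prod.fst '' (s : Set (E × (E →L[𝕜] 𝕜)))) with hS
    haveI hSfin : FiniteDimensional 𝕜 S :=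
      FiniteDimensional.span_of_finite 𝕜 (s.finite_toSet.image _)
    set Φ : E →ₗ[𝕜] (s → 𝕜) :=
      LinearMap.pi (fun x : s => (x.1.2 : E →L[𝕜] 𝕜).toLinearMap) with hΦ
    have hK : ¬ (LinearMap.ker Φ ≤ S) := by
      intro hle
      apply hE
      haveI h1 : FiniteDimensional 𝕜 (LinearMap.ker Φ) :=
        Submodule.finiteDimensional_of_le hle
      haveI h2 : FiniteDimensional 𝕜 (E ⧸ LinearMap.ker Φ) :=
        Module.Finite.equiv Φ.quotKerEquivRange.symm
      rw [← Module.rank_lt_aleph0_iff,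
        ← rank_quotient_add_rank_of_divisionRing (LinearMap.ker Φ)]
      exact Cardinal.add_lt_aleph0 (Module.rank_lt_aleph0 _ _) (Module.rank_lt_aleph0 _ _)
    obtain ⟨v, hvK, hvS⟩ := SetLike.not_le_iff_exists.1 hK
    obtain ⟨ℓ, hl1, hl2⟩ := S.exists_dual_map_eq_bot_of_notMem hvS inferInstance
    set ℓ' : Module.Dual 𝕜 E := (ℓ v)⁻¹ • ℓ with hℓ'
    have hS0 : ∀ x ∈ S, ℓ' x = 0 := by
      intro x hx
      have hmem : ℓ x ∈ S.map ℓ := Submodule.mem_map_of_mem hx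
      rw [hl2, Submodule.mem_bot] at hmem
      simp [hℓ', hmem]
    set T : Submodule 𝕜 E := S ⊔ (𝕜 ∙ v) with hT
    haveI hTfin : FiniteDimensional 𝕜 T := inferInstance
    let ℓT : T →L[𝕜] 𝕜 := ⟨ℓ'.comp T.subtype, LinearMap.continuous_of_finiteDimensional _⟩
    obtain ⟨g, hg, -⟩ := exists_extension_norm_eq T ℓT
    have hgv : g v = 1 := by
      have hvT : v ∈ T := le_sup_right (α := Submodule 𝕜 E)
        (Submodule.mem_span_singleton_self v)
      have h := hg ⟨v, hvT⟩
      simpa [ℓT, hℓ', inv_mul_cancel₀ hl1] using h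
    refine ⟨(v, g), hgv, fun x hx => ⟨?_, ?_⟩⟩
    · have h0 : Φ v = 0 := hvK
      have h1 := congrFun h0 ⟨x, hx⟩
      simpa [hΦ] using h1
    · have hxS : x.1 ∈ S := subset_span ⟨x, hx, rfl⟩
      have hxT : x.1 ∈ T := le_sup_left (α := Submodule 𝕜 E) hxS
      have h := hg ⟨x.1, hxT⟩
      rw [h]
      simpa [ℓT] using hS0 x.1 hxS
  obtain ⟨f, hP, hr⟩ := exists_seq_of_forall_finset_exists
    (fun x : E × (E →L[𝕜] 𝕜) => x.2 x.1 = 1)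
    (fun x y => x.2 y.1 = 0 ∧ y.2 x.1 = 0) step
  refine ⟨fun n => (f n).1, fun n => (f n).2, fun n m => ?_⟩
  rcases lt_trichotomy n m with h | rfl | h
  · rw [if_neg h.ne]; exact (hr n m h).1
  · rw [if_pos rfl]; exact hP n
  · rw [if_neg h.ne']; exact (hr m n h).2

end Biorth

section QuotSyn

variable {𝕜 : Type*} [RCLike 𝕜] {Y : Type*} [AddCommGroup Y] [Module 𝕜 Y]

/-- Type synonym for `Y ⧸ W`, carrying no topology, so we can endow it with the
norm induced by a seminorm whose kernel is `W`. -/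
def QSyn (W : Submodule 𝕜 Y) : Type _ := Y ⧸ W

instance (W : Submodule 𝕜 Y) : AddCommGroup (QSyn W) :=
  inferInstanceAs (AddCommGroup (Y ⧸ W))

instance (W : Submodule 𝕜 Y) : Module 𝕜 (QSyn W) :=
  inferInstanceAs (Module 𝕜 (Y ⧸ W))

end QuotSyn

/-- If Y is a locally convex space whose topology is not weak (there is a
continuous seminorm whose kernel has infinite codimension), then there is a
uniformly equicontinuous sequence of continuous functionals on Y whose
evaluation map covers all finitely supported scalar sequences. -/
theorem stmt_10 {𝕜 : Type*} [RCLike 𝕜] {Y : Type*}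
    [AddCommGroup Y] [Module 𝕜 Y] [TopologicalSpace Y] [IsTopologicalAddGroup Y]
    [ContinuousSMul 𝕜 Y] [Module ℝ Y] [IsScalarTower ℝ 𝕜 Y] [LocallyConvexSpace ℝ Y]
    (p : Seminorm 𝕜 Y) (hp : Continuous p)
    (W : Submodule 𝕜 Y) (hW : (W : Set Y) = {y : Y | p y = 0})
    (hcodim : ¬ Module.Finite 𝕜 (Y ⧸ W)) :
    ∃ f : ℕ → (Y →L[𝕜] 𝕜),
      (∃ U ∈ nhds (0 : Y), ∀ x ∈ U, ∀ n : ℕ, ‖f n x‖ ≤ 1) ∧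
      ∀ a : ℕ →₀ 𝕜, ∃ y : Y, ∀ n : ℕ, f n y = a n := by
  classical
  -- p vanishes on W
  have hpW : ∀ w ∈ W, p w = 0 := by
    intro w hw
    have : w ∈ {y : Y | p y = 0} := hW ▸ hw
    exact this
  -- p is constant on cosets of W
  have hconst : ∀ x y : Y, x - y ∈ W → p x = p y := by
    intro x y hxy
    have h0 : p (x - y) = 0 := hpW _ hxy
    have h1 : p x ≤ p y := by
      calc p x = p (y + (x - y)) := by rw [add_sub_cancel]
      _ ≤ p y + p (x - y) := map_add_le_add p _ _
      _ = p y := by rw [h0, add_zero]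
    have h2 : p y ≤ p x := by
      have h0' : p (y - x) = 0 := by rw [← map_neg_eq_map p, neg_sub]; exact h0
      calc p y = p (x + (y - x)) := by rw [add_sub_cancel]
      _ ≤ p x + p (y - x) := map_add_le_add p _ _
      _ = p x := by rw [h0', add_zero]
    exact le_antisymm h1 h2
  -- the descended norm on the quotient
  set mk' : Y → QSyn W := fun y => Submodule.Quotient.mk y with hmk'
  have mk'_surj : Function.Surjective mk' := Submodule.Quotient.mk_surjective W
  set pbar : QSyn W → ℝ := fun q => p (Quotient.out q) with hpbar
  have hpbar_mk : ∀ y : Y, pbar (mk' y) = p y := by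
    intro y
    apply hconst
    rw [← Submodule.Quotient.eq (p := W)]
    exact Quotient.out_eq' _
  -- a group norm on the quotient
  set N : AddGroupNorm (QSyn W) :=
    { toFun := pbar
      map_zero' := by
        have : (0 : QSyn W) = mk' 0 := rfl
        rw [this, hpbar_mk, map_zero]
      add_le' := by
        intro q r
        obtain ⟨x, rfl⟩ := mk'_surj q
        obtain ⟨y, rfl⟩ := mk'_surj r
        have : mk' x + mk' y = mk' (x + y) := rfl
        rw [this, hpbar_mk, hpbar_mk, hpbar_mk]
        exact map_add_le_add p x y
      neg' := by
        intro q
        obtain ⟨x, rfl⟩ := mk'_surj q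
        have : -mk' x = mk' (-x) := rfl
        rw [this, hpbar_mk, hpbar_mk, map_neg_eq_map]
      eq_zero_of_map_eq_zero' := by
        intro q hq
        obtain ⟨x, rfl⟩ := mk'_surj q
        have hq' : p x = 0 := by rw [← hpbar_mk x]; exact hq
        have hxW : x ∈ W := by
          rw [← SetLike.mem_coe, hW]; exact hq'
        exact (Submodule.Quotient.mk_eq_zero W).2 hxW } with hN
  letI : NormedAddCommGroup (QSyn W) := N.toNormedAddCommGroup
  have hnorm : ∀ y : Y, ‖mk' y‖ = p y := hpbar_mk
  letI : NormedSpace 𝕜 (QSyn W) := by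
    refine ⟨?_⟩
    intro a q
    obtain ⟨x, rfl⟩ := mk'_surj q
    have : a • mk' x = mk' (a • x) := rfl
    rw [this, hnorm, hnorm, map_smul_eq_mul]
  -- the quotient is infinite dimensional
  have hfin : ¬ Module.Finite 𝕜 (QSyn W) := hcodim
  obtain ⟨e, g, hbi⟩ := exists_biorthogonal_aux (𝕜 := 𝕜) hfin
  -- rescale the functionals
  set c : ℕ → ℝ := fun n => max ‖g n‖ 1 with hc
  have hc1 : ∀ n, (1 : ℝ) ≤ c n := fun n => le_max_right _ _
  have hc0 : ∀ n, (0 : ℝ) < c n := fun n => lt_of_lt_of_le one_pos (hc1 n)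
  set d : ℕ → 𝕜 := fun n => ((c n : ℝ) : 𝕜) with hd
  have hd0 : ∀ n, d n ≠ 0 := by
    intro n
    simp only [hd, ne_eq, RCLike.ofReal_eq_zero]
    exact (hc0 n).ne'
  have hdnorm : ∀ n, ‖d n‖ = c n := by
    intro n
    rw [hd]
    simp [abs_of_pos (hc0 n)]
  -- the linear maps on Y
  set mkL : Y →ₗ[𝕜] QSyn W := W.mkQ with hmkL
  set L : ℕ → (Y →ₗ[𝕜] 𝕜) :=
    fun n => (d n)⁻¹ • ((g n).toLinearMap ∘ₗ mkL) with hL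
  have hLapply : ∀ n y, L n y = (d n)⁻¹ * (g n (mk' y)) := by
    intro n y; rfl
  have hLbound : ∀ n y, ‖L n y‖ ≤ p y := by
    intro n y
    rw [hLapply, norm_mul, norm_inv, hdnorm]
    have h1 : ‖(g n) (mk' y)‖ ≤ ‖g n‖ * p y := by
      have := (g n).le_opNorm (mk' y)
      rwa [hnorm] at this
    have h2 : ‖g n‖ * p y ≤ c n * p y :=
      mul_le_mul_of_nonneg_right (le_max_left _ _) (apply_nonneg p y)
    calc (c n)⁻¹ * ‖(g n) (mk' y)‖ ≤ (c n)⁻¹ * (c n * p y) := by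
          exact mul_le_mul_of_nonneg_left (h1.trans h2) (inv_nonneg.2 (hc0 n).le)
      _ = p y := by
          rw [← mul_assoc, inv_mul_cancel₀ (hc0 n).ne', one_mul]
  have hLcont : ∀ n, Continuous (L n) := by
    intro n
    apply continuous_of_continuousAt_zero (L n)
    rw [ContinuousAt, map_zero]
    rw [tendsto_zero_iff_norm_tendsto_zero]
    apply squeeze_zero (fun y => norm_nonneg _) (hLbound n)
    have := hp.tendsto 0
    rwa [map_zero] at this
  set f : ℕ → (Y →L[𝕜] 𝕜) := fun n => ⟨L n, hLcont n⟩ with hf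
  refine ⟨f, ⟨p ⁻¹' Set.Iio 1, ?_, ?_⟩, ?_⟩
  · exact (isOpen_Iio.preimage hp).mem_nhds (by simp [Set.mem_preimage, map_zero p])
  · intro x hx n
    exact (hLbound n x).trans (le_of_lt hx)
  · -- coverage
    intro a
    choose x hx using fun n => mk'_surj (e n)
    refine ⟨∑ m ∈ a.support, (a m * d m) • x m, ?_⟩
    intro n
    have hmk : mk' (∑ m ∈ a.support, (a m * d m) • x m)
        = ∑ m ∈ a.support, (a m * d m) • e m := by
      rw [show mk' (∑ m ∈ a.support, (a m * d m) • x m)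
          = mkL (∑ m ∈ a.support, (a m * d m) • x m) from rfl]
      rw [map_sum]
      refine Finset.sum_congr rfl fun m _ => ?_
      rw [map_smul]
      congr 1
      exact hx m
    have hgn : (g n) (mk' (∑ m ∈ a.support, (a m * d m) • x m))
        = if n ∈ a.support then a n * d n else 0 := by
      rw [hmk, map_sum]
      have : ∀ m ∈ a.support, (g n) ((a m * d m) • e m)
          = if n = m then a m * d m else 0 := by
        intro m _
        rw [map_smul, smul_eq_mul, hbi n m]
        by_cases h : n = m <;> simp [h]
      rw [Finset.sum_congr rfl this, Finset.sum_ite_eq]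
    show (d n)⁻¹ * (g n (mk' (∑ m ∈ a.support, (a m * d m) • x m))) = a n
    rw [hgn]
    by_cases h : n ∈ a.support
    · rw [if_pos h, mul_comm (a n), ← mul_assoc, inv_mul_cancel₀ (hd0 n), one_mul]
    · rw [if_neg h, mul_zero]
      exact (Finsupp.notMem_support_iff.1 h).symm
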